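/- arXiv:2307.14275 — 7 statements merged into one kernel-verified Lean document; each statement's English description precedes it below -/
import Mathlib

section
/- Let P₁, P₂ be pastures with distinguished elements ε₁, ε₂. A map of sets f : P₁ → P₂ is a pasture morphism if and only if f(0) = 0, f(ε₁) = ε₂, f restricts to a group homomorphism P₁× → P₂×, and (f(x), f(y)) ∈ FP(P₂) for every (x,y) ∈ FP(P₁). -/
/-- A *pasture*: a commutative monoid with absorbing zero whose nonzero elements form an
abelian group (i.e. a `CommGroupWithZero`), together with a nullset `null ⊆ P³` satisfying
(P1) `(1,0,0) ∉ null`, (P2) there is a unique `e` with `(1,e,0) ∈ null`, and (P3) `null` is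
closed under the action of `S₃ × P` (encoded via the two generating transpositions together
with simultaneous scaling). -/
structure Pasture where
  carrier : Type*
  [str : CommGroupWithZero carrier]
  null : Set (carrier × carrier × carrier)
  one_zero_zero_not_mem : ((1 : carrier), (0 : carrier), (0 : carrier)) ∉ null
  epsilon_existsUnique : ∃! e : carrier, ((1 : carrier), e, (0 : carrier)) ∈ null
  swap_left_mem : ∀ {a b c : carrier}, (a, b, c) ∈ null → (b, a, c) ∈ null
  swap_right_mem : ∀ {a b c : carrier}, (a, b, c) ∈ null → (a, c, b) ∈ null
  scale_mem : ∀ {a b c : carrier} (p : carrier), (a, b, c) ∈ null → (a * p, b * p, c * p) ∈ null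

attribute [instance] Pasture.str


/-- The distinguished element `ε` of a pasture. -/
noncomputable def Pasture.eps (P : Pasture) : P.carrier := P.epsilon_existsUnique.choose

/-- The set of fundamental pairs of a pasture: pairs `(x, y)` of nonzero elements with
`(x, y, ε) ∈ N_P`. -/
def Pasture.FP (P : Pasture) : Set (P.carrier × P.carrier) :=
  {p | p.1 ≠ 0 ∧ p.2 ≠ 0 ∧ (p.1, p.2, P.eps) ∈ P.null}

/-- The set of fundamental elements of a pasture. -/
def Pasture.FE (P : Pasture) : Set P.carrier := {x | ∃ y, (x, y) ∈ P.FP}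

/-- A pasture morphism: a map of sets with `f 0 = 0`, whose restriction to the unit groups
is a group homomorphism, and which maps the nullset into the nullset. -/
def IsPastureMorphism (P₁ P₂ : Pasture) (f : P₁.carrier → P₂.carrier) : Prop :=
  f 0 = 0 ∧ (∀ x : P₁.carrier, x ≠ 0 → f x ≠ 0) ∧
    (∀ x y : P₁.carrier, x ≠ 0 → y ≠ 0 → f (x * y) = f x * f y) ∧
    ∀ a b c : P₁.carrier, (a, b, c) ∈ P₁.null → (f a, f b, f c) ∈ P₂.null


lemma Pasture.eps_spec (P : Pasture) : ((1 : P.carrier), P.eps, (0 : P.carrier)) ∈ P.null :=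
  P.epsilon_existsUnique.choose_spec.1

lemma Pasture.eps_unique (P : Pasture) {e : P.carrier}
    (h : ((1 : P.carrier), e, (0 : P.carrier)) ∈ P.null) : e = P.eps :=
  P.epsilon_existsUnique.choose_spec.2 e h

lemma Pasture.eps_ne_zero (P : Pasture) : P.eps ≠ 0 := by
  intro h
  exact P.one_zero_zero_not_mem (h ▸ P.eps_spec)

lemma Pasture.zero_zero_zero_mem (P : Pasture) :
    ((0 : P.carrier), (0 : P.carrier), (0 : P.carrier)) ∈ P.null := by
  have := P.scale_mem 0 P.eps_spec
  simpa using this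

lemma Pasture.not_mem_one_nonzero (P : Pasture) {a : P.carrier} (ha : a ≠ 0)
    (h : (a, (0 : P.carrier), (0 : P.carrier)) ∈ P.null) : False := by
  have := P.scale_mem a⁻¹ h
  rw [mul_inv_cancel₀ ha, zero_mul] at this
  exact P.one_zero_zero_not_mem this

lemma Pasture.eq_eps_mul (P : Pasture) {a b : P.carrier} (ha : a ≠ 0)
    (h : (a, b, (0 : P.carrier)) ∈ P.null) : b = P.eps * a := by
  have h2 := P.scale_mem a⁻¹ h
  rw [mul_inv_cancel₀ ha, zero_mul] at h2
  have : b * a⁻¹ = P.eps := P.eps_unique h2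
  field_simp at this
  rw [this, mul_comm]

/-- A set map `f : P₁ → P₂` is a pasture morphism if and only if `f(0) = 0`, `f(ε₁) = ε₂`,
`f` restricts to a group homomorphism `P₁^× → P₂^×`, and `(f x, f y) ∈ FP(P₂)` for every
`(x, y) ∈ FP(P₁)`. -/
theorem isPastureMorphism_iff (P₁ P₂ : Pasture) (f : P₁.carrier → P₂.carrier) :
    IsPastureMorphism P₁ P₂ f ↔
      (f 0 = 0 ∧ f P₁.eps = P₂.eps ∧
        (∀ x : P₁.carrier, x ≠ 0 → f x ≠ 0) ∧
        (∀ x y : P₁.carrier, x ≠ 0 → y ≠ 0 → f (x * y) = f x * f y) ∧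
        ∀ x y : P₁.carrier, (x, y) ∈ P₁.FP → (f x, f y) ∈ P₂.FP) := by
  constructor
  · rintro ⟨h0, hne, hmul, hnull⟩
    have hf1 : f 1 = 1 := by
      have h := hmul 1 1 one_ne_zero one_ne_zero
      rw [one_mul] at h
      have := hne 1 one_ne_zero
      calc f 1 = f 1 * f 1 * (f 1)⁻¹ := by field_simp
        _ = 1 := by rw [← h]; field_simp
    refine ⟨h0, ?_, hne, hmul, ?_⟩
    · have := hnull 1 P₁.eps 0 P₁.eps_spec
      rw [hf1, h0] at this
      exact P₂.eps_unique this
    · rintro x y ⟨hx, hy, hmem⟩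
      have heps : f P₁.eps = P₂.eps := by
        have := hnull 1 P₁.eps 0 P₁.eps_spec
        rw [hf1, h0] at this
        exact P₂.eps_unique this
      have := hnull x y P₁.eps hmem
      rw [heps] at this
      exact ⟨hne x hx, hne y hy, this⟩
  · rintro ⟨h0, heps, hne, hmul, hfp⟩
    have hf1 : f 1 = 1 := by
      have h := hmul 1 1 one_ne_zero one_ne_zero
      rw [one_mul] at h
      have := hne 1 one_ne_zero
      calc f 1 = f 1 * f 1 * (f 1)⁻¹ := by field_simp
        _ = 1 := by rw [← h]; field_simp
    have hfinv : ∀ c : P₁.carrier, c ≠ 0 → f c⁻¹ = (f c)⁻¹ := by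
      intro c hc
      have : f c⁻¹ * f c = 1 := by
        rw [← hmul c⁻¹ c (inv_ne_zero hc) hc, inv_mul_cancel₀ hc, hf1]
      exact eq_inv_of_mul_eq_one_left this
    refine ⟨h0, hne, hmul, ?_⟩
    -- key: handle a triple with at most one zero entry, zero in last slot handled
    have key : ∀ a b c : P₁.carrier, a ≠ 0 → b ≠ 0 →
        (a, b, c) ∈ P₁.null → (f a, f b, f c) ∈ P₂.null := by
      intro a b c ha hb hmem
      by_cases hc : c = 0
      · subst hc
        have hba : b = P₁.eps * a := P₁.eq_eps_mul ha hmem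
        have hfb : f b = P₂.eps * f a := by
          rw [hba, hmul P₁.eps a P₁.eps_ne_zero ha, heps]
        rw [h0, hfb]
        have := P₂.scale_mem (f a) P₂.eps_spec
        simpa using this
      · -- all nonzero
        have h1 := P₁.scale_mem (P₁.eps * c⁻¹) hmem
        have hcc : c * (P₁.eps * c⁻¹) = P₁.eps := by field_simp
        rw [hcc] at h1
        have hx : a * (P₁.eps * c⁻¹) ≠ 0 := by
          simp [ha, hc, P₁.eps_ne_zero]
        have hy : b * (P₁.eps * c⁻¹) ≠ 0 := by
          simp [hb, hc, P₁.eps_ne_zero]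
        have h2 := hfp _ _ ⟨hx, hy, h1⟩
        obtain ⟨hfx, hfy, h3⟩ := h2
        have hec : P₁.eps * c⁻¹ ≠ 0 := by simp [hc, P₁.eps_ne_zero]
        have hfe : f (P₁.eps * c⁻¹) = P₂.eps * (f c)⁻¹ := by
          rw [hmul P₁.eps c⁻¹ P₁.eps_ne_zero (inv_ne_zero hc), heps, hfinv c hc]
        have hfa : f (a * (P₁.eps * c⁻¹)) = f a * (P₂.eps * (f c)⁻¹) := by
          rw [hmul a _ ha hec, hfe]
        have hfb : f (b * (P₁.eps * c⁻¹)) = f b * (P₂.eps * (f c)⁻¹) := by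
          rw [hmul b _ hb hec, hfe]
        rw [hfa, hfb] at h3
        have h4 := P₂.scale_mem (f c * P₂.eps⁻¹) h3
        have hfc : f c ≠ 0 := hne c hc
        have e2 : P₂.eps ≠ 0 := P₂.eps_ne_zero
        have r1 : f a * (P₂.eps * (f c)⁻¹) * (f c * P₂.eps⁻¹) = f a := by field_simp
        have r2 : f b * (P₂.eps * (f c)⁻¹) * (f c * P₂.eps⁻¹) = f b := by field_simp
        have r3 : P₂.eps * (f c * P₂.eps⁻¹) = f c := by field_simp
        rw [r1, r2, r3] at h4
        exact h4
    intro a b c hmem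
    by_cases ha : a = 0 <;> by_cases hb : b = 0 <;> by_cases hc : c = 0
    · subst ha; subst hb; subst hc; rw [h0]; exact P₂.zero_zero_zero_mem
    · subst ha; subst hb
      exact absurd (P₁.swap_left_mem (P₁.swap_right_mem hmem)) fun h => P₁.not_mem_one_nonzero hc h
    · subst ha; subst hc
      exact absurd (P₁.swap_left_mem hmem) fun h => P₁.not_mem_one_nonzero hb h
    · subst ha
      have := key b c 0 hb hc (P₁.swap_right_mem (P₁.swap_left_mem hmem))
      exact P₂.swap_left_mem (P₂.swap_right_mem this)
    · subst hb; subst hc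
      exact absurd hmem (fun h => P₁.not_mem_one_nonzero ha h)
    · subst hb
      have := key a c 0 ha hc (P₁.swap_right_mem hmem)
      exact P₂.swap_right_mem this
    · subst hc
      exact key a b 0 ha hb hmem
    · exact key a b c ha hb hmem
end

section
/- Let P₁, P₂ be pastures with P₁ finitely related, and let f : P₁ → P₂ be a pasture morphism. The following are equivalent: (1) f is an isomorphism of pastures; (2) f restricts to a group isomorphism P₁× → P₂× and the map (a,b,c) ↦ (f(a),f(b),f(c)) restricts to a bijection N_{P₁} → N_{P₂}; (3) f restricts to a group isomorphism P₁× → P₂× and FP(P₁) and FP(P₂) have the same (finite) cardinality. -/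
universe u v

namespace Pasture

variable {P : Pasture.{u}}

lemma eps_mem (P : Pasture.{u}) : ((1 : P.carrier), P.eps, 0) ∈ P.null :=
  P.epsilon_existsUnique.choose_spec.1

lemma eps_eq {e : P.carrier} (h : ((1 : P.carrier), e, 0) ∈ P.null) : e = P.eps :=
  P.epsilon_existsUnique.choose_spec.2 e h

lemma eps_ne_zero_s4 (P : Pasture.{u}) : P.eps ≠ 0 :=
  fun h => P.one_zero_zero_not_mem (h ▸ P.eps_mem)

lemma zero_mem (P : Pasture.{u}) : ((0 : P.carrier), 0, 0) ∈ P.null := by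
  simpa using P.scale_mem 0 P.eps_mem

lemma null_zero_iff {a b : P.carrier} (ha : a ≠ 0) :
    (a, b, (0 : P.carrier)) ∈ P.null ↔ b = P.eps * a := by
  constructor
  · intro h
    have h2 := P.scale_mem a⁻¹ h
    rw [mul_inv_cancel₀ ha, zero_mul] at h2
    have h3 := eps_eq h2
    calc b = b * a⁻¹ * a := by field_simp
    _ = P.eps * a := by rw [h3]
  · rintro rfl
    simpa using P.scale_mem a P.eps_mem

lemma not_mem_two_zero {a : P.carrier} (ha : a ≠ 0) :
    (a, (0 : P.carrier), 0) ∉ P.null := by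
  intro h
  have h2 := P.scale_mem a⁻¹ h
  rw [mul_inv_cancel₀ ha, zero_mul] at h2
  exact P.one_zero_zero_not_mem h2

lemma eps_sq (P : Pasture.{u}) : P.eps * P.eps = 1 := by
  have h := P.swap_left_mem P.eps_mem
  exact ((P.null_zero_iff P.eps_ne_zero_s4).mp h).symm

lemma fp_of_null {a b c : P.carrier} (ha : a ≠ 0) (hb : b ≠ 0) (hc : c ≠ 0)
    (h : (a, b, c) ∈ P.null) : (a * P.eps * c⁻¹, b * P.eps * c⁻¹) ∈ P.FP := by
  refine ⟨by simp [ha, P.eps_ne_zero_s4, hc], by simp [hb, P.eps_ne_zero_s4, hc], ?_⟩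
  have h2 := P.scale_mem (P.eps * c⁻¹) h
  have hcc : c * (P.eps * c⁻¹) = P.eps := by
    rw [mul_comm P.eps, ← mul_assoc, mul_inv_cancel₀ hc, one_mul]
  rw [hcc, ← mul_assoc, ← mul_assoc] at h2
  exact h2

lemma null_of_fp {x y c : P.carrier} (hc : c ≠ 0) (h : (x, y) ∈ P.FP) :
    (x * P.eps * c, y * P.eps * c, c) ∈ P.null := by
  have h2 := P.scale_mem (P.eps * c) h.2.2
  have he : P.eps * (P.eps * c) = c := by rw [← mul_assoc, P.eps_sq, one_mul]
  rw [he, ← mul_assoc, ← mul_assoc] at h2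
  exact h2

end Pasture

namespace IsPastureMorphism

variable {P₁ : Pasture.{u}} {P₂ : Pasture.{v}} {f : P₁.carrier → P₂.carrier}

lemma map_one (hf : IsPastureMorphism P₁ P₂ f) : f 1 = 1 := by
  have h := hf.2.2.1 1 1 one_ne_zero one_ne_zero
  rw [one_mul] at h
  have h1 : f 1 ≠ 0 := hf.2.1 1 one_ne_zero
  exact (mul_left_cancel₀ h1 (by rw [mul_one, ← h])).symm

lemma map_eps (hf : IsPastureMorphism P₁ P₂ f) : f P₁.eps = P₂.eps := by
  have h := hf.2.2.2 _ _ _ P₁.eps_mem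
  rw [hf.map_one, hf.1] at h
  exact Pasture.eps_eq h

end IsPastureMorphism

/-- For a pasture morphism `f : P₁ → P₂` with `P₁` finitely related (i.e. `FP(P₁)` finite),
the following are equivalent: (1) `f` is an isomorphism of pastures; (2) `f` restricts to a
bijection on unit groups and the induced map on triples restricts to a bijection
`N_{P₁} → N_{P₂}`; (3) `f` restricts to a bijection on unit groups and `FP(P₁)`, `FP(P₂)`
have the same finite cardinality. -/
theorem isPastureIso_tfae (P₁ P₂ : Pasture) (hfin : P₁.FP.Finite)
    (f : P₁.carrier → P₂.carrier) (hf : IsPastureMorphism P₁ P₂ f) :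
    List.TFAE [
      (∃ g : P₂.carrier → P₁.carrier, IsPastureMorphism P₂ P₁ g ∧
        (∀ x, g (f x) = x) ∧ (∀ y, f (g y) = y)),
      (Set.BijOn f {x : P₁.carrier | x ≠ 0} {y : P₂.carrier | y ≠ 0} ∧
        Set.BijOn (fun t : P₁.carrier × P₁.carrier × P₁.carrier => (f t.1, f t.2.1, f t.2.2))
          P₁.null P₂.null),
      (Set.BijOn f {x : P₁.carrier | x ≠ 0} {y : P₂.carrier | y ≠ 0} ∧
        P₂.FP.Finite ∧ P₁.FP.ncard = P₂.FP.ncard)] := by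
  classical
  have hne : Nonempty P₁.carrier := ⟨0⟩
  tfae_have 1 → 2
  · rintro ⟨g, hg, hgf, hfg⟩
    have hinj : Function.Injective f := fun x y h => by rw [← hgf x, h, hgf]
    constructor
    · refine ⟨fun x hx => hf.2.1 x hx, hinj.injOn, fun y hy => ?_⟩
      exact ⟨g y, fun h => hy (by rw [← hfg y, h, hf.1]), hfg y⟩
    · refine ⟨fun t ht => hf.2.2.2 _ _ _ ht, ?_, ?_⟩
      · intro s _ t _ h
        simp only [Prod.mk.injEq] at h
        exact Prod.ext (hinj h.1) (Prod.ext (hinj h.2.1) (hinj h.2.2))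
      · intro t ht
        refine ⟨(g t.1, g t.2.1, g t.2.2), hg.2.2.2 _ _ _ ht, ?_⟩
        simp only [hfg]
  tfae_have 2 → 3
  · rintro ⟨hbij, htrip⟩
    refine ⟨hbij, ?_⟩
    have himg : (fun p : P₁.carrier × P₁.carrier => (f p.1, f p.2)) '' P₁.FP = P₂.FP := by
      apply Set.Subset.antisymm
      · rintro _ ⟨⟨x, y⟩, hxy, rfl⟩
        refine ⟨hf.2.1 x hxy.1, hf.2.1 y hxy.2.1, ?_⟩
        have := hf.2.2.2 _ _ _ hxy.2.2
        rwa [hf.map_eps] at this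
      · rintro ⟨u, v⟩ ⟨hu, hv, huv⟩
        obtain ⟨⟨a, b, c⟩, habc, heq⟩ := htrip.2.2 huv
        simp only [Prod.mk.injEq] at heq
        have ha : a ≠ 0 := fun h => hu (by rw [← heq.1, h, hf.1])
        have hb : b ≠ 0 := fun h => hv (by rw [← heq.2.1, h, hf.1])
        have hc : c ≠ 0 := fun h => P₂.eps_ne_zero_s4 (by rw [← heq.2.2, h, hf.1])
        have hce : c = P₁.eps := by
          apply hbij.injOn hc P₁.eps_ne_zero_s4
          rw [heq.2.2, hf.map_eps]
        refine ⟨(a, b), ⟨ha, hb, hce ▸ habc⟩, ?_⟩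
        simp [heq.1, heq.2.1]
    have hinjφ : Set.InjOn (fun p : P₁.carrier × P₁.carrier => (f p.1, f p.2)) P₁.FP := by
      intro p hp q hq h
      simp only [Prod.mk.injEq] at h
      exact Prod.ext (hbij.injOn hp.1 hq.1 h.1) (hbij.injOn hp.2.1 hq.2.1 h.2)
    refine ⟨himg ▸ hfin.image _, ?_⟩
    rw [← himg, Set.ncard_image_of_injOn hinjφ]
  tfae_have 3 → 1
  · rintro ⟨hbij, hfin₂, hcard⟩
    have hmaps : (fun p : P₁.carrier × P₁.carrier => (f p.1, f p.2)) '' P₁.FP ⊆ P₂.FP := by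
      rintro _ ⟨⟨x, y⟩, hxy, rfl⟩
      refine ⟨hf.2.1 x hxy.1, hf.2.1 y hxy.2.1, ?_⟩
      have := hf.2.2.2 _ _ _ hxy.2.2
      rwa [hf.map_eps] at this
    have hinjφ : Set.InjOn (fun p : P₁.carrier × P₁.carrier => (f p.1, f p.2)) P₁.FP := by
      intro p hp q hq h
      simp only [Prod.mk.injEq] at h
      exact Prod.ext (hbij.injOn hp.1 hq.1 h.1) (hbij.injOn hp.2.1 hq.2.1 h.2)
    have himg : (fun p : P₁.carrier × P₁.carrier => (f p.1, f p.2)) '' P₁.FP = P₂.FP := by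
      apply Set.eq_of_subset_of_ncard_le hmaps _ hfin₂
      rw [Set.ncard_image_of_injOn hinjφ, hcard]
    set g : P₂.carrier → P₁.carrier :=
      fun y => if y = 0 then 0 else Function.invFunOn f {x | x ≠ 0} y with hgdef
    have hg0 : g 0 = 0 := if_pos rfl
    have hgne : ∀ y : P₂.carrier, y ≠ 0 → g y ≠ 0 := fun y hy => by
      rw [hgdef]; simp only [if_neg hy]
      exact hbij.surjOn.mapsTo_invFunOn hy
    have hfg : ∀ y : P₂.carrier, y ≠ 0 → f (g y) = y := fun y hy => by
      rw [hgdef]; simp only [if_neg hy]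
      exact hbij.invOn_invFunOn.2 hy
    have hfg' : ∀ y, f (g y) = y := fun y => by
      by_cases hy : y = 0
      · rw [hy, hg0, hf.1]
      · exact hfg y hy
    have hgf : ∀ x, g (f x) = x := fun x => by
      by_cases hx : x = 0
      · rw [hx, hf.1, hg0]
      · have h1 : f x ≠ 0 := hf.2.1 x hx
        exact hbij.injOn (hgne _ h1) hx (hfg _ h1)
    have hgmul : ∀ u v : P₂.carrier, u ≠ 0 → v ≠ 0 → g (u * v) = g u * g v := by
      intro u v hu hv
      have huv : u * v ≠ 0 := mul_ne_zero hu hv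
      apply hbij.injOn (hgne _ huv) (mul_ne_zero (hgne u hu) (hgne v hv))
      rw [hfg _ huv, hf.2.2.1 _ _ (hgne u hu) (hgne v hv), hfg _ hu, hfg _ hv]
    have hgeps : g P₂.eps = P₁.eps := by rw [← hf.map_eps, hgf]
    have key0 : ∀ u v : P₂.carrier, u ≠ 0 → (u, v, (0 : P₂.carrier)) ∈ P₂.null →
        (g u, g v, (0 : P₁.carrier)) ∈ P₁.null := by
      intro u v hu h
      have hv := (P₂.null_zero_iff hu).mp h
      have hv0 : v ≠ 0 := hv ▸ mul_ne_zero P₂.eps_ne_zero_s4 hu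
      have : g v = P₁.eps * g u := by
        rw [hv, hgmul _ _ P₂.eps_ne_zero_s4 hu, hgeps]
      exact (P₁.null_zero_iff (hgne u hu)).mpr this
    have hgnull : ∀ u v w : P₂.carrier, (u, v, w) ∈ P₂.null →
        (g u, g v, g w) ∈ P₁.null := by
      intro u v w h
      by_cases hw : w = 0
      · subst hw
        by_cases hu : u = 0
        · subst hu
          by_cases hv : v = 0
          · subst hv; rw [hg0]; exact P₁.zero_mem
          · exact absurd (P₂.swap_left_mem h) (Pasture.not_mem_two_zero hv)
        · rw [hg0]; exact key0 u v hu h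
      · by_cases hu : u = 0
        · subst hu
          by_cases hv : v = 0
          · subst hv
            exact absurd (P₂.swap_left_mem (P₂.swap_right_mem h))
              (Pasture.not_mem_two_zero hw)
          · have h2 := P₂.swap_right_mem (P₂.swap_left_mem h)
            have h3 := key0 v w hv h2
            rw [hg0]
            exact P₁.swap_left_mem (P₁.swap_right_mem h3)
        · by_cases hv : v = 0
          · subst hv
            have h2 := P₂.swap_right_mem h
            have h3 := key0 u w hu h2
            rw [hg0]
            exact P₁.swap_right_mem h3
          · -- all nonzero: use fundamental pairs
            have hfp2 := Pasture.fp_of_null hu hv hw h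
            rw [← himg] at hfp2
            obtain ⟨⟨a, b⟩, hab, heq⟩ := hfp2
            simp only [Prod.mk.injEq] at heq
            have ha : a ≠ 0 := hab.1
            have hb : b ≠ 0 := hab.2.1
            have h1 := Pasture.null_of_fp (P := P₁) (hgne w hw) hab
            have hcalc : ∀ z : P₂.carrier, z ≠ 0 →
                z * P₂.eps * w⁻¹ * (P₂.eps * w) = z := by
              intro z hz
              have h5 : w⁻¹ * (P₂.eps * w) = P₂.eps := by
                rw [mul_comm P₂.eps w, ← mul_assoc, inv_mul_cancel₀ hw, one_mul]
              calc z * P₂.eps * w⁻¹ * (P₂.eps * w)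
                  = z * P₂.eps * (w⁻¹ * (P₂.eps * w)) := by rw [mul_assoc]
                _ = z * (P₂.eps * P₂.eps) := by rw [h5, mul_assoc]
                _ = z := by rw [P₂.eps_sq, mul_one]
            have hgu : g u = a * P₁.eps * g w := by
              have hfa : f (a * P₁.eps * g w) = u := by
                rw [hf.2.2.1 _ _ (mul_ne_zero ha P₁.eps_ne_zero_s4) (hgne w hw),
                  hf.2.2.1 _ _ ha P₁.eps_ne_zero_s4, heq.1, hf.map_eps, hfg w hw,
                  mul_assoc (u * P₂.eps * w⁻¹)]
                exact hcalc u hu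
              rw [← hfa, hgf]
            have hgv : g v = b * P₁.eps * g w := by
              have hfb : f (b * P₁.eps * g w) = v := by
                rw [hf.2.2.1 _ _ (mul_ne_zero hb P₁.eps_ne_zero_s4) (hgne w hw),
                  hf.2.2.1 _ _ hb P₁.eps_ne_zero_s4, heq.2, hf.map_eps, hfg w hw,
                  mul_assoc (v * P₂.eps * w⁻¹)]
                exact hcalc v hv
              rw [← hfb, hgf]
            rw [hgu, hgv]
            exact h1
    exact ⟨g, ⟨hg0, hgne, hgmul, hgnull⟩, hgf, hfg'⟩
  tfae_finish
end

section
/- Let P be a pasture and suppose there exist x, y, z, w ∈ P× such that (x,y) ∈ FP(P), (x,z) ∈ FP(P), and (y·z⁻¹, w) ∈ FP(P). Then for every field k there is no pasture morphism P → k. -/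
/-- A field `k`, viewed as a pasture: the unit group is `k^×`, `ε = -1`, and the nullset
consists of all triples `(a, b, c)` with `a + b + c = 0`. -/
def Pasture.ofField (k : Type) [Field k] : Pasture where
  carrier := k
  null := {t : k × k × k | t.1 + t.2.1 + t.2.2 = 0}
  one_zero_zero_not_mem := by simp
  epsilon_existsUnique := by
    refine ⟨-1, by simp, fun y hy => ?_⟩
    have : (1 : k) + y + 0 = 0 := hy
    linear_combination this
  swap_left_mem := by
    intro a b c h
    have : a + b + c = 0 := h
    show b + a + c = 0
    linear_combination this
  swap_right_mem := by
    intro a b c h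
    have : a + b + c = 0 := h
    show a + c + b = 0
    linear_combination this
  scale_mem := by
    intro a b c p h
    have : a + b + c = 0 := h
    show a * p + b * p + c * p = 0
    linear_combination p * this

/-- If a pasture `P` contains units `x, y, z, w` with `(x, y) ∈ FP(P)`, `(x, z) ∈ FP(P)` and
`(y·z⁻¹, w) ∈ FP(P)`, then there is no pasture morphism from `P` to any field. -/
theorem no_morphism_to_field (P : Pasture) (x y z w : P.carrier)
    (hx : x ≠ 0) (hy : y ≠ 0) (hz : z ≠ 0) (hw : w ≠ 0)
    (h1 : (x, y) ∈ P.FP) (h2 : (x, z) ∈ P.FP) (h3 : (y * z⁻¹, w) ∈ P.FP) :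
    ∀ (k : Type) [Field k],
      ¬ ∃ f : P.carrier → (Pasture.ofField k).carrier, IsPastureMorphism P (Pasture.ofField k) f := by
  rintro k _ ⟨f, hf0, hfne, hfmul, hfnull⟩
  let g : P.carrier → k := f
  have hg0 : g 0 = 0 := hf0
  have hgne : ∀ x : P.carrier, x ≠ 0 → g x ≠ 0 := hfne
  have hgmul : ∀ a b : P.carrier, a ≠ 0 → b ≠ 0 → g (a * b) = g a * g b := hfmul
  have hgnull : ∀ a b c : P.carrier, (a, b, c) ∈ P.null → g a + g b + g c = 0 :=
    fun a b c h => hfnull a b c h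
  have hg1 : g 1 = 1 := by
    have h := hgmul 1 1 one_ne_zero one_ne_zero
    rw [mul_one] at h
    have h1ne : g 1 ≠ 0 := hgne 1 one_ne_zero
    field_simp at h
    exact h.symm
  have heps : ((1 : P.carrier), P.eps, (0 : P.carrier)) ∈ P.null :=
    P.epsilon_existsUnique.choose_spec.1
  have hgeps : g P.eps = -1 := by
    have h := hgnull _ _ _ heps
    rw [hg1, hg0] at h
    linear_combination h
  have key : ∀ a b : P.carrier, (a, b) ∈ P.FP → g a + g b = 1 := by
    intro a b hab
    have h := hgnull _ _ _ hab.2.2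
    rw [hgeps] at h
    linear_combination h
  have k1 := key _ _ h1
  have k2 := key _ _ h2
  have k3 := key _ _ h3
  have hyz : g y = g z := by linear_combination k1 - k2
  have hgzne : g z ≠ 0 := hgne z hz
  have hzinv : g z⁻¹ = (g z)⁻¹ := by
    refine eq_inv_of_mul_eq_one_left ?_
    rw [← hgmul z⁻¹ z (inv_ne_zero hz) hz, inv_mul_cancel₀ hz, hg1]
  have hmul : g (y * z⁻¹) = 1 := by
    rw [hgmul y z⁻¹ hy (inv_ne_zero hz), hzinv, hyz, mul_inv_cancel₀ hgzne]
  rw [hmul] at k3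
  have : g w = 0 := by linear_combination k3
  exact hgne w hw this
end

section
/- Let F be a spanning forest of the bipartite graph Γ(M,B₀). Then the subgroup of ℤ^E generated by the vectors {χ_B − χ_{B₀} : B ∈ 𝓑} is equal to the subgroup generated by the vectors {e_b − e_a : {a,b} is an edge of F with a ∈ B₀ and b ∈ E∖B₀}. -/
/-- The bipartite exchange graph `Γ(M, B₀)` on the ground set of `M`: `a ∈ B₀` and
`b ∉ B₀` are adjacent if and only if `(B₀ ∖ {a}) ∪ {b}` is a base of `M`. -/
def exchangeGraph {α : Type*} (M : Matroid α) (B₀ : Set α) : SimpleGraph α where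
  Adj a b := (a ∈ B₀ ∧ b ∉ B₀ ∧ M.IsBase (insert b (B₀ \ {a}))) ∨
             (b ∈ B₀ ∧ a ∉ B₀ ∧ M.IsBase (insert a (B₀ \ {b})))
  symm := ⟨by intro a b h; tauto⟩
  loopless := ⟨by rintro a (⟨h1, h2, -⟩ | ⟨h1, h2, -⟩) <;> exact h2 h1⟩

section Aux

open Set

variable {α : Type*} [Fintype α] [DecidableEq α] {M : Matroid α}

/-- Indicator arithmetic for a single exchange. -/
lemma indicator_exchange (B : Set α) (a b : α) (ha : a ∈ B) (hb : b ∉ B) :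
    (insert b (B \ {a})).indicator (1 : α → ℤ) - B.indicator 1 =
      Pi.single b 1 - Pi.single a 1 := by
  have hab : a ≠ b := fun h => hb (h ▸ ha)
  funext x
  simp only [Pi.sub_apply, Set.indicator_apply, Set.mem_insert_iff, Set.mem_diff,
    Set.mem_singleton_iff, Pi.single_apply, Pi.one_apply]
  by_cases hxb : x = b <;> by_cases hxa : x = a <;> by_cases hxB : x ∈ B <;> simp_all

/-- Symmetric exchange property for bases of a matroid on a finite ground set. -/
lemma sym_exchange (hE : M.E = Set.univ) {B B₀ : Set α} (hB : M.IsBase B) (hB₀ : M.IsBase B₀)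
    {b : α} (hb : b ∈ B \ B₀) :
    ∃ a ∈ B₀ \ B, M.IsBase (insert b (B₀ \ {a})) ∧ M.IsBase (insert a (B \ {b})) := by
  by_contra hcon
  push_neg at hcon
  have hbE : b ∈ M.E := by rw [hE]; trivial
  set S : Set (Set α) := {I | I ⊆ B₀ ∧ b ∈ M.closure I} with hSdef
  have hB₀S : B₀ ∈ S := ⟨Set.Subset.rfl, by rw [hB₀.closure_eq, hE]; trivial⟩
  obtain ⟨I, hIS, hImin⟩ := Set.exists_min_image S Set.ncard S.toFinite ⟨B₀, hB₀S⟩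
  -- every element of `I` can be exchanged into `B₀` against `b`
  have hkey : ∀ a ∈ I, b ∉ M.closure (B₀ \ {a}) := by
    intro a haI hbc
    have h1 : b ∉ M.closure (I \ {a}) := by
      intro h
      have hmem : (I \ {a}) ∈ S := ⟨Set.diff_subset.trans hIS.1, h⟩
      have h2 := hImin _ hmem
      have hlt : (I \ {a}).ncard < I.ncard :=
        Set.ncard_diff_singleton_lt_of_mem haI I.toFinite
      omega
    have h2 : b ∈ M.closure (insert a (I \ {a})) := by
      rw [Set.insert_diff_singleton, Set.insert_eq_of_mem haI]; exact hIS.2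
    have h3 := Matroid.closure_exchange ⟨h2, h1⟩
    have h4 : a ∈ M.closure (insert b (B₀ \ {a})) :=
      M.closure_subset_closure
        (Set.insert_subset_insert (Set.diff_subset_diff_left hIS.1)) h3.1
    rw [Matroid.closure_insert_eq_of_mem_closure hbc] at h4
    exact hB₀.indep.notMem_closure_sdiff_of_mem (hIS.1 haI) h4
  have hIcl : I ⊆ M.closure (B \ {b}) := by
    intro a haI
    by_cases haB : a ∈ B
    · exact M.mem_closure_of_mem ⟨haB, fun h => hb.2 (h ▸ hIS.1 haI)⟩
        (by rw [hE]; exact Set.subset_univ _)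
    · have hind : M.Indep (insert b (B₀ \ {a})) :=
        ((hB₀.indep.subset Set.diff_subset).insert_indep_iff_of_notMem
          (fun h => hb.2 h.1)).2 ⟨hbE, hkey a haI⟩
      have hbase : M.IsBase (insert b (B₀ \ {a})) :=
        hB₀.exchange_isBase_of_indep hb.2 hind
      by_contra hacl
      have haE : a ∈ M.E := by rw [hE]; trivial
      have hind2 : M.Indep (insert a (B \ {b})) :=
        ((hB.indep.subset Set.diff_subset).insert_indep_iff_of_notMem
          (fun h => haB h.1)).2 ⟨haE, hacl⟩
      have hbase2 : M.IsBase (insert a (B \ {b})) := hB.exchange_isBase_of_indep haB hind2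
      exact hcon a ⟨hIS.1 haI, haB⟩ hbase hbase2
  have hbcl : b ∈ M.closure (B \ {b}) :=
    Matroid.closure_subset_closure_of_subset_closure hIcl hIS.2
  exact hB.indep.notMem_closure_sdiff_of_mem hb.1 hbcl

/-- In a maximal acyclic subset of the edges of a graph, the endpoints of every
edge of the graph are connected. -/
lemma forest_reachable {G : SimpleGraph α} {F : Set (Sym2 α)}
    (hFsub : F ⊆ G.edgeSet) (hFacyclic : (SimpleGraph.fromEdgeSet F).IsAcyclic)
    (hFmax : ∀ F' : Set (Sym2 α), F ⊆ F' → F' ⊆ G.edgeSet →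
      (SimpleGraph.fromEdgeSet F').IsAcyclic → F' = F)
    {a b : α} (hab : G.Adj a b) : (SimpleGraph.fromEdgeSet F).Reachable a b := by
  by_contra hreach
  have hne : a ≠ b := hab.ne
  set G' := SimpleGraph.fromEdgeSet (insert s(a, b) F) with hG'
  have hbridge : G'.IsBridge s(a, b) := by
    rw [SimpleGraph.isBridge_iff]
    refine fun hr => hreach ?_
    refine hr.mono (fun u v h => ?_)
    rw [SimpleGraph.deleteEdges_adj] at h
    obtain ⟨h1, h2⟩ := h
    rw [SimpleGraph.fromEdgeSet_adj] at h1 ⊢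
    refine ⟨?_, h1.2⟩
    rcases Set.mem_insert_iff.1 h1.1 with h3 | h3
    · exact absurd (Set.mem_singleton_iff.2 h3) h2
    · exact h3
  have hacyc : G'.IsAcyclic := by
    intro v c hc
    have hmem : s(a, b) ∉ c.edges :=
      hbridge.notMem_edges_of_isCycle hc
    have hsub : ∀ e ∈ c.edges, e ∈ (SimpleGraph.fromEdgeSet F).edgeSet := by
      intro e he
      have h1 := c.edges_subset_edgeSet he
      rw [SimpleGraph.edgeSet_fromEdgeSet] at h1 ⊢
      obtain ⟨h1, h2⟩ := h1
      rcases Set.mem_insert_iff.1 h1 with rfl | h1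
      · exact absurd he hmem
      · exact ⟨h1, h2⟩
    exact hFacyclic (c.transfer _ hsub) (hc.transfer hsub)
  have hFeq := hFmax _ (Set.subset_insert _ _)
    (Set.insert_subset ((SimpleGraph.mem_edgeSet _).2 hab) hFsub) hacyc
  have habF : s(a, b) ∈ F := hFeq ▸ Set.mem_insert _ _
  exact hreach (SimpleGraph.Adj.reachable ((SimpleGraph.fromEdgeSet_adj _).2 ⟨habF, hne⟩))

/-- Telescoping the elementary vectors along a walk. -/
lemma walk_single_mem (H : AddSubgroup (α → ℤ)) {G : SimpleGraph α}
    (hadj : ∀ u v : α, G.Adj u v → (Pi.single v 1 - Pi.single u 1 : α → ℤ) ∈ H) :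
    ∀ {u v : α}, G.Walk u v → (Pi.single v 1 - Pi.single u 1 : α → ℤ) ∈ H := by
  intro u v w
  induction w with
  | nil => simpa using H.zero_mem
  | @cons u x v h p ih =>
    have hsum := H.add_mem (hadj _ _ h) ih
    have heq : (Pi.single x 1 - Pi.single u 1 : α → ℤ) +
        (Pi.single v 1 - Pi.single x 1) = Pi.single v 1 - Pi.single u 1 := by ring
    rwa [heq] at hsum

end Aux

/-- Let `F` be a spanning forest (a maximal acyclic set of edges) of the bipartite exchange
graph `Γ(M, B₀)`. Then the subgroup of `ℤ^E` generated by `{χ_B − χ_{B₀} : B a base}` equals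
the subgroup generated by `{e_b − e_a : {a,b} ∈ F, a ∈ B₀, b ∉ B₀}`. -/
theorem spanning_forest_generates {α : Type*} [Fintype α] [DecidableEq α]
    (M : Matroid α) (hE : M.E = Set.univ) (B₀ : Set α) (hB₀ : M.IsBase B₀)
    (F : Set (Sym2 α)) (hFsub : F ⊆ (exchangeGraph M B₀).edgeSet)
    (hFacyclic : (SimpleGraph.fromEdgeSet F).IsAcyclic)
    (hFmax : ∀ F' : Set (Sym2 α), F ⊆ F' → F' ⊆ (exchangeGraph M B₀).edgeSet →
      (SimpleGraph.fromEdgeSet F').IsAcyclic → F' = F) :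
    AddSubgroup.closure
        {v : α → ℤ | ∃ B : Set α, M.IsBase B ∧
          v = B.indicator (1 : α → ℤ) - B₀.indicator (1 : α → ℤ)} =
      AddSubgroup.closure
        {v : α → ℤ | ∃ a b : α, a ∈ B₀ ∧ b ∉ B₀ ∧ s(a, b) ∈ F ∧
          v = Pi.single b 1 - Pi.single a 1} := by
  set H := AddSubgroup.closure
      {v : α → ℤ | ∃ a b : α, a ∈ B₀ ∧ b ∉ B₀ ∧ s(a, b) ∈ F ∧
        v = Pi.single b 1 - Pi.single a 1} with hHdef
  -- each step of a walk in the forest lies in `H`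
  have hstep : ∀ u v : α, (SimpleGraph.fromEdgeSet F).Adj u v →
      (Pi.single v 1 - Pi.single u 1 : α → ℤ) ∈ H := by
    intro u v h
    rw [SimpleGraph.fromEdgeSet_adj] at h
    have hadj : (exchangeGraph M B₀).Adj u v := (SimpleGraph.mem_edgeSet _).1 (hFsub h.1)
    rcases hadj with ⟨h1, h2, -⟩ | ⟨h1, h2, -⟩
    · exact AddSubgroup.subset_closure ⟨u, v, h1, h2, h.1, rfl⟩
    · have hgen : (Pi.single u 1 - Pi.single v 1 : α → ℤ) ∈ H :=
        AddSubgroup.subset_closure ⟨v, u, h1, h2, Sym2.eq_swap ▸ h.1, rfl⟩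
      have := H.neg_mem hgen
      rwa [neg_sub] at this
  -- each edge of the exchange graph lies in `H`
  have hedge : ∀ a b : α, (exchangeGraph M B₀).Adj a b →
      (Pi.single b 1 - Pi.single a 1 : α → ℤ) ∈ H := by
    intro a b hab
    obtain ⟨w⟩ := forest_reachable hFsub hFacyclic hFmax hab
    exact walk_single_mem H hstep w
  apply le_antisymm
  · rw [AddSubgroup.closure_le]
    rintro v ⟨B, hB, rfl⟩
    -- induction on the size of `B \ B₀`
    clear_value H
    have main : ∀ (n : ℕ) (B : Set α), M.IsBase B → (B \ B₀).ncard ≤ n →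
        B.indicator (1 : α → ℤ) - B₀.indicator 1 ∈ H := by
      intro n
      induction n with
      | zero =>
        intro B hB hc
        have hem : B \ B₀ = ∅ := by
          have := (B \ B₀).toFinite
          rw [← Set.ncard_eq_zero this]
          omega
        have hBB : B = B₀ := hB.eq_of_subset_isBase hB₀ (Set.diff_eq_empty.1 hem)
        simp only [hBB, sub_self]
        exact H.zero_mem
      | succ n ih =>
        intro B hB hc
        rcases Set.eq_empty_or_nonempty (B \ B₀) with hem | ⟨b, hbB⟩
        · have hBB : B = B₀ := hB.eq_of_subset_isBase hB₀ (Set.diff_eq_empty.1 hem)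
          simp only [hBB, sub_self]
          exact H.zero_mem
        · obtain ⟨a, haB, hbase1, hbase2⟩ := sym_exchange hE hB hB₀ hbB
          have hadj : (exchangeGraph M B₀).Adj a b := Or.inl ⟨haB.1, hbB.2, hbase1⟩
          have h1 : (Pi.single b 1 - Pi.single a 1 : α → ℤ) ∈ H := hedge a b hadj
          set B' := insert a (B \ {b}) with hB'def
          have hab : a ≠ b := fun h => hbB.2 (h ▸ haB.1)
          have haB' : a ∈ B' := Set.mem_insert _ _
          have hbB' : b ∉ B' := by
            rw [hB'def]
            rintro (h | h)
            · exact hab h.symm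
            · exact h.2 rfl
          have hBeq : B = insert b (B' \ {a}) := by
            rw [hB'def, Set.insert_diff_self_of_notMem (fun h => haB.2 h.1),
              Set.insert_diff_singleton, Set.insert_eq_of_mem hbB.1]
          have hB'd : B' \ B₀ = (B \ B₀) \ {b} := by
            ext x
            simp only [hB'def, Set.mem_diff, Set.mem_insert_iff, Set.mem_singleton_iff]
            constructor
            · rintro ⟨rfl | ⟨hx1, hx2⟩, hx3⟩
              · exact absurd haB.1 hx3
              · exact ⟨⟨hx1, hx3⟩, hx2⟩
            · rintro ⟨⟨hx1, hx2⟩, hx3⟩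
              exact ⟨Or.inr ⟨hx1, hx3⟩, hx2⟩
          have hcard : (B' \ B₀).ncard ≤ n := by
            rw [hB'd]
            have h2 := Set.ncard_diff_singleton_lt_of_mem hbB (B \ B₀).toFinite
            have h3 := Set.ncard_diff_singleton_le (B \ B₀) b
            omega
          have h2 := ih B' hbase2 hcard
          have hstep2 : B.indicator (1 : α → ℤ) - B'.indicator 1 =
              Pi.single b 1 - Pi.single a 1 := by
            rw [hBeq]; exact indicator_exchange B' a b haB' hbB'
          have heq : B.indicator (1 : α → ℤ) - B₀.indicator 1 =
              (B'.indicator 1 - B₀.indicator 1) +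
                (B.indicator (1 : α → ℤ) - B'.indicator 1) := by ring
          rw [heq, hstep2]
          exact H.add_mem h2 h1
    exact main _ B hB le_rfl
  · rw [AddSubgroup.closure_le]
    rintro v ⟨a, b, ha, hb, hF, rfl⟩
    have hadj : (exchangeGraph M B₀).Adj a b := (SimpleGraph.mem_edgeSet _).1 (hFsub hF)
    rcases hadj with ⟨-, -, hbase⟩ | ⟨h1, -, -⟩
    · exact AddSubgroup.subset_closure
        ⟨insert b (B₀ \ {a}), hbase, (indicator_exchange B₀ a b ha hb).symm⟩
    · exact absurd h1 hb
end

section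
/- For every base B ∈ 𝓑 of M, the vector χ_B − χ_{B₀} lies in the subgroup of ℤ^E generated by the vectors {e_b − e_a : a ∈ B₀, b ∈ E∖B₀, (B₀∖{a}) ∪ {b} ∈ 𝓑}. -/
open Set

/-- A minimal subset `J ⊆ B₀` with `b ∈ cl J` exists. -/
lemma exists_minimal_closure_subset {α : Type*} [Fintype α] (M : Matroid α)
    (b : α) (B₀ : Set α) (hb : b ∈ M.closure B₀) :
    ∃ J ⊆ B₀, b ∈ M.closure J ∧ ∀ a ∈ J, b ∉ M.closure (J \ {a}) := by
  have key : ∀ n (J : Set α), J.ncard = n → J ⊆ B₀ → b ∈ M.closure J →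
      ∃ J' ⊆ B₀, b ∈ M.closure J' ∧ ∀ a ∈ J', b ∉ M.closure (J' \ {a}) := by
    intro n
    induction n using Nat.strong_induction_on with
    | _ n ih =>
      intro J hJcard hJB hbJ
      by_cases h : ∀ a ∈ J, b ∉ M.closure (J \ {a})
      · exact ⟨J, hJB, hbJ, h⟩
      · push_neg at h
        obtain ⟨a, haJ, hba⟩ := h
        have hlt : (J \ {a}).ncard < n := by
          rw [← hJcard]
          exact Set.ncard_diff_singleton_lt_of_mem haJ J.toFinite
        exact ih _ hlt _ rfl ((diff_subset).trans hJB) hba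
  exact key (B₀.ncard) B₀ rfl subset_rfl hb

/-- Symmetric exchange: for bases `B₀`, `B` and `b ∈ B \ B₀` there is `a ∈ B₀ \ B`
such that both `insert a (B \ {b})` and `insert b (B₀ \ {a})` are bases. -/
lemma symmetric_exchange {α : Type*} [Fintype α] (M : Matroid α) (hE : M.E = Set.univ)
    (B₀ B : Set α) (hB₀ : M.IsBase B₀) (hB : M.IsBase B) {b : α} (hb : b ∈ B \ B₀) :
    ∃ a ∈ B₀ \ B, M.IsBase (insert a (B \ {b})) ∧ M.IsBase (insert b (B₀ \ {a})) := by
  have hbE : b ∈ M.closure B₀ := by rw [hB₀.closure_eq, hE]; trivial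
  obtain ⟨J, hJB₀, hbJ, hJmin⟩ := exists_minimal_closure_subset M b B₀ hbE
  -- find a ∈ J not in cl(B \ {b})
  have hbnot : b ∉ M.closure (B \ {b}) :=
    hB.indep.notMem_closure_diff_of_mem hb.1
  have hJnot : ¬ J ⊆ M.closure (B \ {b}) := by
    intro hsub
    exact hbnot (M.closure_subset_closure_of_subset_closure hsub hbJ)
  obtain ⟨a, haJ, hacl⟩ := not_subset.1 hJnot
  have haB₀ : a ∈ B₀ := hJB₀ haJ
  have hab : a ≠ b := fun h => hb.2 (h ▸ haB₀)
  have haB : a ∉ B := by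
    intro haB
    exact hacl (M.subset_closure (B \ {b}) (by rw [hE]; exact subset_univ _) ⟨haB, hab⟩)
  refine ⟨a, ⟨haB₀, haB⟩, ?_, ?_⟩
  · -- insert a (B \ {b}) is a base
    refine hB.exchange_isBase_of_indep haB ?_
    rw [(hB.indep.subset diff_subset).insert_indep_iff_of_notMem (fun h => haB h.1)]
    exact ⟨by rw [hE]; trivial, hacl⟩
  · -- insert b (B₀ \ {a}) is a base
    have hbB₀a : b ∉ M.closure (B₀ \ {a}) := by
      intro hmem
      -- b ∈ cl J, b ∉ cl (J \ {a}); exchange gives a ∈ cl (insert b (J \ {a}))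
      have h1 : b ∈ M.closure (insert a (J \ {a})) := by
        rwa [insert_diff_singleton, insert_eq_of_mem haJ]
      have h2 : a ∈ M.closure (insert b (J \ {a})) :=
        Matroid.mem_closure_insert (hJmin a haJ) h1
      have h3 : M.closure (insert b (J \ {a})) ⊆ M.closure (insert b (B₀ \ {a})) :=
        M.closure_subset_closure (insert_subset_insert (diff_subset_diff_left hJB₀))
      have h4 : M.closure (insert b (B₀ \ {a})) = M.closure (B₀ \ {a}) := by
        rw [← Matroid.closure_insert_closure_eq_closure_insert, insert_eq_of_mem hmem,
          Matroid.closure_closure]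
      exact hB₀.indep.notMem_closure_diff_of_mem haB₀ (h4 ▸ h3 h2)
    refine hB₀.exchange_isBase_of_indep hb.2 ?_
    rw [(hB₀.indep.subset diff_subset).insert_indep_iff_of_notMem (fun h => hb.2 h.1)]
    exact ⟨by rw [hE]; trivial, hbB₀a⟩

/-- For every base `B` of a matroid `M` on a finite ground set with fixed base `B₀`, the
vector `χ_B − χ_{B₀} ∈ ℤ^E` lies in the subgroup of `ℤ^E` generated by the vectors
`e_b − e_a` for `a ∈ B₀`, `b ∉ B₀` with `(B₀ ∖ {a}) ∪ {b}` a base. -/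
theorem indicator_sub_mem_exchange_closure {α : Type*} [Fintype α] [DecidableEq α]
    (M : Matroid α) (hE : M.E = Set.univ)
    (B₀ : Set α) (hB₀ : M.IsBase B₀) (B : Set α) (hB : M.IsBase B) :
    (B.indicator (1 : α → ℤ) - B₀.indicator (1 : α → ℤ)) ∈
      AddSubgroup.closure {v : α → ℤ | ∃ a b : α, a ∈ B₀ ∧ b ∉ B₀ ∧
        M.IsBase (insert b (B₀ \ {a})) ∧ v = Pi.single b 1 - Pi.single a 1} := by
  have key : ∀ n (B : Set α), M.IsBase B → (B \ B₀).ncard = n →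
      (B.indicator (1 : α → ℤ) - B₀.indicator (1 : α → ℤ)) ∈
        AddSubgroup.closure {v : α → ℤ | ∃ a b : α, a ∈ B₀ ∧ b ∉ B₀ ∧
          M.IsBase (insert b (B₀ \ {a})) ∧ v = Pi.single b 1 - Pi.single a 1} := by
    intro n
    induction n using Nat.strong_induction_on with
    | _ n ih =>
      intro B hB hcard
      classical
      rcases Nat.eq_zero_or_pos n with rfl | hpos
      · have hBB₀ : B ⊆ B₀ := by
          rw [← diff_eq_empty]
          exact (Set.ncard_eq_zero (B \ B₀).toFinite).1 hcard
        rw [hB.eq_of_subset_isBase hB₀ hBB₀, sub_self]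
        exact zero_mem _
      · have hne : (B \ B₀).Nonempty := by
          rw [Set.nonempty_iff_ne_empty]
          intro h
          rw [h, Set.ncard_empty] at hcard
          omega
        obtain ⟨b, hbB, hbB₀⟩ := hne
        have hbmem : b ∈ B \ B₀ := (Set.mem_diff b).mpr (And.intro hbB hbB₀)
        obtain ⟨a, hamem, hB', hBex⟩ := symmetric_exchange M hE B₀ B hB₀ hB hbmem
        obtain ⟨haB₀, haB⟩ := hamem
        set B' := insert a (B \ {b}) with hB'def
        have hdiff : B' \ B₀ = (B \ B₀) \ {b} := by
          rw [hB'def]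
          ext x
          simp only [Set.mem_diff, Set.mem_insert_iff, Set.mem_singleton_iff]
          constructor
          · rintro ⟨rfl | ⟨hxB, hxb⟩, hx₀⟩
            · exact absurd haB₀ hx₀
            · exact ⟨⟨hxB, hx₀⟩, hxb⟩
          · rintro ⟨⟨hxB, hx₀⟩, hxb⟩
            exact ⟨Or.inr ⟨hxB, hxb⟩, hx₀⟩
        have hcard' : (B' \ B₀).ncard = n - 1 := by
          rw [hdiff, Set.ncard_diff_singleton_of_mem hbmem, hcard]
        have hmem' := ih (n - 1) (by omega) B' hB' hcard'
        have hgen : (Pi.single b 1 - Pi.single a 1 : α → ℤ) ∈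
            AddSubgroup.closure {v : α → ℤ | ∃ a b : α, a ∈ B₀ ∧ b ∉ B₀ ∧
              M.IsBase (insert b (B₀ \ {a})) ∧ v = Pi.single b 1 - Pi.single a 1} :=
          AddSubgroup.subset_closure ⟨a, b, haB₀, hbB₀, hBex, rfl⟩
        have heq : B.indicator (1 : α → ℤ) - B₀.indicator (1 : α → ℤ) =
            (B'.indicator (1 : α → ℤ) - B₀.indicator (1 : α → ℤ)) +
              (Pi.single b 1 - Pi.single a 1) := by
          have hab : a ≠ b := fun h => hbB₀ (h ▸ haB₀)
          funext x
          simp only [Pi.add_apply, Pi.sub_apply]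
          by_cases hxa : x = a
          · have e1 : B.indicator (1 : α → ℤ) x = 0 := by
              simp [Set.indicator_apply, hxa, haB]
            have e2 : B'.indicator (1 : α → ℤ) x = 1 := by
              simp [hB'def, Set.indicator_apply, hxa]
            have e3 : (Pi.single b 1 : α → ℤ) x = 0 := by
              simp [Pi.single_apply, hxa, fun h : a = b => hab h]
            have e4 : (Pi.single a 1 : α → ℤ) x = 1 := by simp [Pi.single_apply, hxa]
            rw [e1, e2, e3, e4]; ring
          · by_cases hxb : x = b
            · have e1 : B.indicator (1 : α → ℤ) x = 1 := by
                simp [Set.indicator_apply, hxb, hbB]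
              have e2 : B'.indicator (1 : α → ℤ) x = 0 := by
                have hba : ¬ b = a := fun h => hab h.symm
                simp [hB'def, Set.indicator_apply, hxb, hba]
              have e3 : (Pi.single b 1 : α → ℤ) x = 1 := by simp [Pi.single_apply, hxb]
              have e4 : (Pi.single a 1 : α → ℤ) x = 0 := by
                have hba : ¬ b = a := fun h => hab h.symm
                simp [Pi.single_apply, hxb, hba]
              rw [e1, e2, e3, e4]; ring
            · have e2 : B'.indicator (1 : α → ℤ) x = B.indicator (1 : α → ℤ) x := by
                have : x ∈ B' ↔ x ∈ B := by
                  rw [hB'def]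
                  simp only [Set.mem_insert_iff, Set.mem_diff, Set.mem_singleton_iff]
                  constructor
                  · rintro (rfl | ⟨h, _⟩)
                    · exact absurd rfl hxa
                    · exact h
                  · exact fun h => Or.inr ⟨h, hxb⟩
                rw [Set.indicator_apply, Set.indicator_apply, if_congr this rfl rfl]
              have e3 : (Pi.single b 1 : α → ℤ) x = 0 := by simp [Pi.single_apply, hxb]
              have e4 : (Pi.single a 1 : α → ℤ) x = 0 := by simp [Pi.single_apply, hxa]
              rw [e2, e3, e4]; ring
        rw [heq]
        exact add_mem hmem' hgen
  exact key ((B \ B₀).ncard) B hB rfl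
end

section
/- Let M be a matroid of rank r on a finite ground set E with set of bases 𝓑, let J ⊆ E with |J| = r − 2, and let e₁, e₂, e₃, e₄ be four distinct elements of E∖J. If J∪{e₁,e₂} ∈ 𝓑 and J∪{e₃,e₄} ∈ 𝓑, then either (J∪{e₁,e₃} ∈ 𝓑 and J∪{e₂,e₄} ∈ 𝓑) or (J∪{e₁,e₄} ∈ 𝓑 and J∪{e₂,e₃} ∈ 𝓑). (This is the 3-term Grassmann–Plücker relation over the Krasner hyperfield, showing every matroid has a canonical representation over 𝕂.) -/
private lemma gp_exch {α : Type*} {M : Matroid α} {J : Set α} {a b c d : α}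
    (haJ : a ∉ J) (hcJ : c ∉ J) (hdJ : d ∉ J)
    (hab : a ≠ b) (hac : a ≠ c) (had : a ≠ d)
    (hB1 : M.IsBase (J ∪ {a, b})) (hB2 : M.IsBase (J ∪ {c, d})) :
    M.IsBase (J ∪ {c, b}) ∨ M.IsBase (J ∪ {d, b}) := by
  have ha : a ∈ (J ∪ {a, b}) \ (J ∪ {c, d}) := by
    simp only [Set.mem_diff, Set.mem_union, Set.mem_insert_iff, Set.mem_singleton_iff]
    tauto
  obtain ⟨y, hy, hyB⟩ := hB1.exchange hB2 ha
  have key : ∀ c' : α, insert c' ((J ∪ {a, b}) \ {a}) = J ∪ {c', b} := by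
    intro c'
    ext x
    simp only [Set.mem_insert_iff, Set.mem_diff, Set.mem_union, Set.mem_singleton_iff]
    constructor
    · rintro (rfl | ⟨(h | h | h), hx⟩) <;> tauto
    · intro h
      rcases h with h | rfl | rfl
      · exact Or.inr ⟨Or.inl h, fun hxa => haJ (hxa ▸ h)⟩
      · exact Or.inl rfl
      · exact Or.inr ⟨Or.inr (Or.inr rfl), fun hxa => hab hxa.symm⟩
  simp only [Set.mem_diff, Set.mem_union, Set.mem_insert_iff, Set.mem_singleton_iff] at hy
  rw [key] at hyB
  rcases hy with ⟨hy1, hy2⟩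
  rcases hy1 with h | h | h
  · exact absurd (Or.inl h) hy2
  · subst h; exact Or.inl hyB
  · subst h; exact Or.inr hyB

/-- The 3-term Grassmann–Plücker relation over the Krasner hyperfield: if `M` is a matroid
of rank `r` on a finite ground set `E`, `J ⊆ E` has `r − 2` elements, and `e₁, e₂, e₃, e₄`
are distinct elements of `E ∖ J` with `J ∪ {e₁, e₂}` and `J ∪ {e₃, e₄}` bases, then either
`J ∪ {e₁, e₃}` and `J ∪ {e₂, e₄}` are both bases, or `J ∪ {e₁, e₄}` and `J ∪ {e₂, e₃}` are
both bases. -/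
theorem gp_relation_krasner {α : Type*} (M : Matroid α) (hfin : M.E.Finite) (r : ℕ)
    (hrank : ∀ B : Set α, M.IsBase B → B.encard = (r : ℕ∞))
    (J : Set α) (hJ : J ⊆ M.E) (hJcard : J.encard + 2 = (r : ℕ∞))
    (e₁ e₂ e₃ e₄ : α)
    (he₁ : e₁ ∈ M.E \ J) (he₂ : e₂ ∈ M.E \ J) (he₃ : e₃ ∈ M.E \ J) (he₄ : e₄ ∈ M.E \ J)
    (h12ne : e₁ ≠ e₂) (h13ne : e₁ ≠ e₃) (h14ne : e₁ ≠ e₄)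
    (h23ne : e₂ ≠ e₃) (h24ne : e₂ ≠ e₄) (h34ne : e₃ ≠ e₄)
    (h12 : M.IsBase (J ∪ {e₁, e₂})) (h34 : M.IsBase (J ∪ {e₃, e₄})) :
    (M.IsBase (J ∪ {e₁, e₃}) ∧ M.IsBase (J ∪ {e₂, e₄})) ∨
      (M.IsBase (J ∪ {e₁, e₄}) ∧ M.IsBase (J ∪ {e₂, e₃})) := by
  have hc12 : (J ∪ {e₂, e₁}) = J ∪ {e₁, e₂} := by rw [Set.pair_comm]
  have hc34 : (J ∪ {e₄, e₃}) = J ∪ {e₃, e₄} := by rw [Set.pair_comm]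
  have H1 : M.IsBase (J ∪ {e₃, e₂}) ∨ M.IsBase (J ∪ {e₄, e₂}) :=
    gp_exch he₁.2 he₃.2 he₄.2 h12ne h13ne h14ne h12 h34
  have H2 : M.IsBase (J ∪ {e₃, e₁}) ∨ M.IsBase (J ∪ {e₄, e₁}) :=
    gp_exch he₂.2 he₃.2 he₄.2 h12ne.symm h23ne h24ne (hc12 ▸ h12) h34
  have H3 : M.IsBase (J ∪ {e₁, e₄}) ∨ M.IsBase (J ∪ {e₂, e₄}) :=
    gp_exch he₃.2 he₁.2 he₂.2 h34ne h13ne.symm h23ne.symm h34 h12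
  have H4 : M.IsBase (J ∪ {e₁, e₃}) ∨ M.IsBase (J ∪ {e₂, e₃}) :=
    gp_exch he₄.2 he₁.2 he₂.2 h34ne.symm h14ne.symm h24ne.symm (hc34 ▸ h34) h12
  rw [Set.pair_comm e₃ e₂, Set.pair_comm e₄ e₂] at H1
  rw [Set.pair_comm e₃ e₁, Set.pair_comm e₄ e₁] at H2
  tauto
end

section
/- For any matroid M of rank r on [n] = {0,…,n−1} and any two bases B₀, B₀' of M, the Tutte groups G/R(M,B₀) and G/R(M,B₀') are isomorphic as abelian groups; that is, up to isomorphism the Tutte group 𝕋_M is independent of the choice of basis B₀. -/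
/-- The number of inversions of the sequence obtained by listing the elements of `I` in
increasing order followed by `ki` and `kj`; its parity is the sign of the permutation
`σ_{ij}` bringing this sequence into increasing order. -/
noncomputable def invCount {n : ℕ} (I : Set (Fin n)) (ki kj : Fin n) : ℕ :=
  {x ∈ I | ki < x}.ncard + {x ∈ I | kj < x}.ncard + (if kj < ki then 1 else 0)

/-- The subgroup `R(M, B₀)` of the free abelian group `G` on the symbols
`{ε} ∪ {X_B : B a base of M}` (with `ε` encoded as `none` and `X_B` as `some B`):
it is generated by `ε²` (additively `2 • ε`), `X_{B₀}`, and all cross-ratios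
`Cr(I, k₁, k₂, k₃, k₄) = ε^{sgn(σ₁₃)+sgn(σ₂₄)+sgn(σ₁₄)+sgn(σ₂₃)} ·
X_{I∪{k₁,k₃}} · X_{I∪{k₂,k₄}} · X_{I∪{k₁,k₄}}⁻¹ · X_{I∪{k₂,k₃}}⁻¹`
with `I` of size `r − 2`, all four subscripts bases, and `I ∪ {k₁, k₂}` not a base.
The Tutte group of `M` with respect to `B₀` is the quotient `G ⧸ R(M, B₀)`. -/
noncomputable def tutteRelations {n : ℕ} (M : Matroid (Fin n)) (r : ℕ)
    (B₀ : {B : Set (Fin n) // M.IsBase B}) :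
    AddSubgroup (FreeAbelianGroup (Option {B : Set (Fin n) // M.IsBase B})) :=
  AddSubgroup.closure
    ({(2 : ℤ) • FreeAbelianGroup.of (none : Option {B : Set (Fin n) // M.IsBase B}),
      FreeAbelianGroup.of (some B₀)} ∪
     {g | ∃ (I : Set (Fin n)) (k₁ k₂ k₃ k₄ : Fin n)
            (h13 : M.IsBase (I ∪ {k₁, k₃})) (h24 : M.IsBase (I ∪ {k₂, k₄}))
            (h14 : M.IsBase (I ∪ {k₁, k₄})) (h23 : M.IsBase (I ∪ {k₂, k₃})),
          I.encard + 2 = (r : ℕ∞) ∧ ¬ M.IsBase (I ∪ {k₁, k₂}) ∧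
          g = ((invCount I k₁ k₃ + invCount I k₂ k₄ + invCount I k₁ k₄ + invCount I k₂ k₃) % 2) •
                FreeAbelianGroup.of (none : Option {B : Set (Fin n) // M.IsBase B})
              + FreeAbelianGroup.of (some ⟨I ∪ {k₁, k₃}, h13⟩)
              + FreeAbelianGroup.of (some ⟨I ∪ {k₂, k₄}, h24⟩)
              - FreeAbelianGroup.of (some ⟨I ∪ {k₁, k₄}, h14⟩)
              - FreeAbelianGroup.of (some ⟨I ∪ {k₂, k₃}, h23⟩)})

/-- Shift homomorphism on the free abelian group on `Option α`: fixes `of none` and sends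
`of (some c)` to `of (some c) + (of (some a) - of (some b))`. -/
noncomputable def shiftHom {α : Type*} (a b : α) :
    FreeAbelianGroup (Option α) →+ FreeAbelianGroup (Option α) :=
  FreeAbelianGroup.lift (fun o => match o with
    | none => FreeAbelianGroup.of (none : Option α)
    | some c => FreeAbelianGroup.of (some c)
        + (FreeAbelianGroup.of (some a) - FreeAbelianGroup.of (some b)))

@[simp] lemma shiftHom_none {α : Type*} (a b : α) :
    shiftHom a b (FreeAbelianGroup.of none) = FreeAbelianGroup.of none := by
  simp [shiftHom]

@[simp] lemma shiftHom_some {α : Type*} (a b c : α) :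
    shiftHom a b (FreeAbelianGroup.of (some c)) =
      FreeAbelianGroup.of (some c)
        + (FreeAbelianGroup.of (some a) - FreeAbelianGroup.of (some b)) := by
  simp [shiftHom]

lemma shiftHom_comp {α : Type*} (a b : α) (x : FreeAbelianGroup (Option α)) :
    shiftHom a b (shiftHom b a x) = x := by
  induction x using FreeAbelianGroup.induction_on with
  | zero => simp
  | of o =>
      cases o with
      | none => simp
      | some c => simp only [shiftHom_some, map_add, map_sub]; abel
  | neg z hz => simp only [map_neg, hz]
  | add y z hy hz => simp only [map_add, hy, hz]

/-- The shift automorphism. -/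
noncomputable def shiftEquiv {α : Type*} (a b : α) :
    FreeAbelianGroup (Option α) ≃+ FreeAbelianGroup (Option α) :=
  { toFun := shiftHom a b
    invFun := shiftHom b a
    left_inv := shiftHom_comp b a
    right_inv := shiftHom_comp a b
    map_add' := map_add _ }

lemma shiftHom_map_relations {n : ℕ} (M : Matroid (Fin n)) (r : ℕ)
    (B₀ B₀' : {B : Set (Fin n) // M.IsBase B}) :
    (tutteRelations M r B₀).map (shiftHom B₀' B₀) = tutteRelations M r B₀' := by
  unfold tutteRelations
  rw [AddMonoidHom.map_closure]
  congr 1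
  rw [Set.image_union]
  congr 1
  · -- image of the pair {2ε, X_{B₀}}
    rw [Set.image_pair]
    have h1 : shiftHom B₀' B₀ ((2 : ℤ) • FreeAbelianGroup.of
        (none : Option {B : Set (Fin n) // M.IsBase B})) = (2 : ℤ) • FreeAbelianGroup.of none := by
      rw [map_zsmul, shiftHom_none]
    have h2 : shiftHom B₀' B₀ (FreeAbelianGroup.of (some B₀)) =
        FreeAbelianGroup.of (some B₀') := by
      rw [shiftHom_some]; abel
    rw [h1, h2]
  · -- the cross-ratio set is fixed pointwise
    have : ∀ g ∈ {g | ∃ (I : Set (Fin n)) (k₁ k₂ k₃ k₄ : Fin n)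
            (h13 : M.IsBase (I ∪ {k₁, k₃})) (h24 : M.IsBase (I ∪ {k₂, k₄}))
            (h14 : M.IsBase (I ∪ {k₁, k₄})) (h23 : M.IsBase (I ∪ {k₂, k₃})),
          I.encard + 2 = (r : ℕ∞) ∧ ¬ M.IsBase (I ∪ {k₁, k₂}) ∧
          g = ((invCount I k₁ k₃ + invCount I k₂ k₄ + invCount I k₁ k₄ + invCount I k₂ k₃) % 2) •
                FreeAbelianGroup.of (none : Option {B : Set (Fin n) // M.IsBase B})
              + FreeAbelianGroup.of (some ⟨I ∪ {k₁, k₃}, h13⟩)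
              + FreeAbelianGroup.of (some ⟨I ∪ {k₂, k₄}, h24⟩)
              - FreeAbelianGroup.of (some ⟨I ∪ {k₁, k₄}, h14⟩)
              - FreeAbelianGroup.of (some ⟨I ∪ {k₂, k₃}, h23⟩)},
        shiftHom B₀' B₀ g = g := by
      rintro g ⟨I, k₁, k₂, k₃, k₄, h13, h24, h14, h23, hc, hnb, rfl⟩
      simp only [map_add, map_sub, map_nsmul, shiftHom_none, shiftHom_some]
      abel
    rw [Set.image_congr this, Set.image_id']

/-- For a matroid `M` of rank `r` on `[n] = {0, …, n−1}` and any two bases `B₀, B₀'`, the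
Tutte groups `G ⧸ R(M, B₀)` and `G ⧸ R(M, B₀')` are isomorphic as abelian groups: up to
isomorphism the Tutte group `𝕋_M` does not depend on the choice of base. -/
theorem tutteGroup_independent_of_base {n : ℕ} (M : Matroid (Fin n))
    (hE : M.E = Set.univ) (r : ℕ)
    (hrank : ∀ B : Set (Fin n), M.IsBase B → B.encard = (r : ℕ∞))
    (B₀ B₀' : {B : Set (Fin n) // M.IsBase B}) :
    Nonempty
      ((FreeAbelianGroup (Option {B : Set (Fin n) // M.IsBase B}) ⧸ tutteRelations M r B₀) ≃+
       (FreeAbelianGroup (Option {B : Set (Fin n) // M.IsBase B}) ⧸ tutteRelations M r B₀')) := by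
  refine ⟨QuotientAddGroup.congr _ _ (shiftEquiv B₀' B₀) ?_⟩
  exact shiftHom_map_relations M r B₀ B₀'
end
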